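/- Let f : ℝⁿ → ℝᵐ be continuous and Ω ⊆ ℝⁿ closed and nonempty. If for every y ∈ ℝᵐ the section f(Ω) ∩ (y - ℝᵐ₊) is compact, then the set f(Ω) + ℝᵐ₊ is closed. -/

import Mathlib

open Pointwise

/-- If every section `f(Ω) ∩ (y - ℝᵐ₊)` is compact, then the set
`f(Ω) + ℝᵐ₊` is closed. -/
theorem closed_sum_of_compact_sections (n m : ℕ)
    (f : (Fin n → ℝ) → (Fin m → ℝ)) (hf : Continuous f)
    (Ω : Set (Fin n → ℝ)) (hΩc : IsClosed Ω) (hΩne : Ω.Nonempty)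
    (hsec : ∀ y : Fin m → ℝ, IsCompact {z | z ∈ f '' Ω ∧ z ≤ y}) :
    IsClosed (f '' Ω + {d : Fin m → ℝ | 0 ≤ d}) := by
  apply IsSeqClosed.isClosed
  intro u z hu huz
  simp only [Set.mem_add] at hu
  choose a ha d hd hsum using hu
  -- eventually u n ≤ z + 1
  have hbound0 : ∀ᶠ k : ℕ in Filter.atTop, ∀ i, u k i ≤ z i + 1 := by
    rw [Filter.eventually_all]
    intro i
    have hti : Filter.Tendsto (fun k => u k i) Filter.atTop (nhds (z i)) :=
      (tendsto_pi_nhds.mp huz) i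
    exact hti.eventually (eventually_le_nhds (by linarith : z i < z i + 1))
  have hbound : ∀ᶠ k : ℕ in Filter.atTop, u k ≤ z + 1 :=
    hbound0.mono fun k hk i => by simpa using hk i
  obtain ⟨N, hN⟩ := Filter.eventually_atTop.mp hbound
  -- a (k+N) lies in the compact section at z+1
  have hmem : ∀ k : ℕ, a (k + N) ∈ {w | w ∈ f '' Ω ∧ w ≤ z + 1} := by
    intro k
    refine ⟨ha _, ?_⟩
    have h1 : a (k + N) ≤ u (k + N) := by
      have := hsum (k + N)
      have hd' : (0 : Fin m → ℝ) ≤ d (k + N) := hd (k + N)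
      calc a (k + N) = a (k + N) + 0 := by ring
        _ ≤ a (k + N) + d (k + N) := by exact add_le_add (le_refl _) hd'
        _ = u (k + N) := hsum (k + N)
    exact h1.trans (hN (k + N) (Nat.le_add_left N k))
  obtain ⟨w, hwK, φ, hφ, hconv⟩ := (hsec (z + 1)).tendsto_subseq hmem
  -- u (φ k + N) → z
  have hphi : Filter.Tendsto (fun k => φ k + N) Filter.atTop Filter.atTop := by
    apply Filter.tendsto_atTop_mono (fun k => le_trans hφ.le_apply (Nat.le_add_right _ N))
    exact Filter.tendsto_id
  have huz' : Filter.Tendsto (fun k => u (φ k + N)) Filter.atTop (nhds z) :=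
    huz.comp hphi
  have hdiff : Filter.Tendsto (fun k => u (φ k + N) - a (φ k + N))
      Filter.atTop (nhds (z - w)) := huz'.sub hconv
  have hzw : (0 : Fin m → ℝ) ≤ z - w := by
    refine le_of_tendsto_of_tendsto' tendsto_const_nhds hdiff ?_
    intro k
    have := hd (φ k + N)
    have hs := hsum (φ k + N)
    intro i
    simp only [Pi.sub_apply]
    have : a (φ k + N) i + d (φ k + N) i = u (φ k + N) i := congrFun hs i
    have hdi : (0 : ℝ) ≤ d (φ k + N) i := hd (φ k + N) i
    simp only [Pi.zero_apply]
    linarith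
  exact Set.mem_add.mpr ⟨w, hwK.1, z - w, hzw, by abel⟩
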